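/- Let G be a compact, Hausdorff, totally disconnected topological group and α a topologically transitive topological group automorphism of G such that the pair (G,α) has finite depth. Then the homoclinic group bcg(α) = con(α) ∩ con(α⁻¹) is dense in G. -/

import Mathlib

open Pointwise Filter Topology

variable {G : Type*}

/-- `V₊ = ⋂_{k ≥ 0} α^k(V)`. -/
def plusPart [Group G] (α : MulAut G) (V : Set G) : Set G :=
  ⋂ k : ℕ, ⇑(α ^ k) '' V

/-- `V₋ = ⋂_{k ≥ 0} α^{-k}(V)`. -/
def minusPart [Group G] (α : MulAut G) (V : Set G) : Set G :=
  ⋂ k : ℕ, ⇑(α⁻¹ ^ k) '' V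

/-- `V` is tidy above for `α` if `V = V₊V₋`. -/
def TidyAbove [Group G] (α : MulAut G) (V : Set G) : Prop :=
  V = plusPart α V * minusPart α V

/-- `V` is tidy below for `α` if `V₊₊` and `V₋₋` are closed. -/
def TidyBelow [Group G] [TopologicalSpace G] (α : MulAut G) (V : Set G) : Prop :=
  IsClosed (⋃ k : ℕ, ⇑(α ^ k) '' plusPart α V) ∧
  IsClosed (⋃ k : ℕ, ⇑(α⁻¹ ^ k) '' minusPart α V)

/-- `V` is tidy for `α` if it is tidy above and tidy below. -/
def Tidy [Group G] [TopologicalSpace G] (α : MulAut G) (V : Set G) : Prop :=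
  TidyAbove α V ∧ TidyBelow α V

/-- The nub of `α`: the intersection of all compact open subgroups tidy for `α`. -/
def nub [Group G] [TopologicalSpace G] (α : MulAut G) : Subgroup G :=
  ⨅ V ∈ {V : Subgroup G | IsCompact (V : Set G) ∧ IsOpen (V : Set G) ∧ Tidy α (V : Set G)}, V

/-- The contraction group `con(α) = { x | α^n(x) → 1 as n → ∞ }`. -/
def conSet [Group G] [TopologicalSpace G] (α : MulAut G) : Set G :=
  {x : G | Tendsto (fun n : ℕ => (α ^ n) x) atTop (𝓝 1)}

/-- The homoclinic (two-sided contraction) group `bcg(α) = con(α) ∩ con(α⁻¹)`. -/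
def bcgSet [Group G] [TopologicalSpace G] (α : MulAut G) : Set G :=
  conSet α ∩ conSet α⁻¹

/-- The bounded contraction group `bcon(α)`. -/
def bconSet [Group G] [TopologicalSpace G] (α : MulAut G) : Set G :=
  {x ∈ conSet α | IsCompact (closure (Set.range fun n : ℕ => (α⁻¹ ^ n) x))}

/-- Image of a subgroup under an automorphism. -/
def mapAut [Group G] (α : MulAut G) (V : Subgroup G) : Subgroup G where
  carrier := ⇑α '' (V : Set G)
  one_mem' := ⟨1, V.one_mem, map_one α⟩
  mul_mem' := by
    rintro a b ⟨a', ha, rfl⟩ ⟨b', hb, rfl⟩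
    exact ⟨a' * b', V.mul_mem ha hb, map_mul α a' b'⟩
  inv_mem' := by
    rintro a ⟨a', ha, rfl⟩
    exact ⟨a'⁻¹, V.inv_mem ha, map_inv α a'⟩

/-- `V₊` as a subgroup. -/
def plusSub [Group G] (α : MulAut G) (V : Subgroup G) : Subgroup G :=
  ⨅ k : ℕ, mapAut (α ^ k) V

/-- `V₋` as a subgroup. -/
def minusSub [Group G] (α : MulAut G) (V : Subgroup G) : Subgroup G :=
  ⨅ k : ℕ, mapAut (α⁻¹ ^ k) V

/-- The shift automorphism of `F^ℤ`. -/
def shiftAut (F : Type*) [Group F] : MulAut (ℤ → F) where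
  toFun f := fun n => f (n + 1)
  invFun f := fun n => f (n - 1)
  left_inv f := by funext n; show f (n - 1 + 1) = f n; congr 1; omega
  right_inv f := by funext n; show f (n + 1 - 1) = f n; congr 1; omega
  map_mul' f g := rfl

section BcgAux

set_option linter.unusedSectionVars false
variable [Group G] [TopologicalSpace G] [IsTopologicalGroup G] [T2Space G]

private lemma apadd (α : MulAut G) (a b : ℤ) (x : G) :
    (α ^ a) ((α ^ b) x) = (α ^ (a + b)) x := by
  rw [zpow_add, MulAut.mul_apply]

private lemma apzero (α : MulAut G) (x : G) : (α ^ (0 : ℤ)) x = x := by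
  rw [zpow_zero, MulAut.one_apply]

private lemma inv_zpow_apply (α : MulAut G) (j : ℤ) (x : G) :
    ((α⁻¹) ^ j) x = (α ^ (-j)) x := by
  rw [inv_zpow, zpow_neg]

private lemma cont_zpow (α : MulAut G) (h : Continuous ⇑α) (h' : Continuous ⇑α⁻¹) (z : ℤ) :
    Continuous ⇑(α ^ z) := by
  have hn : ∀ (β : MulAut G), Continuous ⇑β → ∀ n : ℕ, Continuous ⇑(β ^ n) := by
    intro β hβ n
    induction n with
    | zero =>
      have : ⇑(β ^ (0:ℕ)) = id := by funext x; simp [pow_zero]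
      rw [this]; exact continuous_id
    | succ n ih =>
      have : ⇑(β ^ (n + 1)) = ⇑(β ^ n) ∘ ⇑β := by
        funext x; rw [pow_succ]; rfl
      rw [this]; exact ih.comp hβ
  obtain ⟨n, rfl | rfl⟩ := z.eq_nat_or_neg
  · rw [zpow_natCast]; exact hn α h n
  · rw [zpow_neg, zpow_natCast, ← inv_pow]; exact hn α⁻¹ h' n

/-- The key "follower set stabilization" lemma: there is `k₀` such that any element whose
coordinates on `[-k₀, -1]` are trivial lies in the same left `V`-coset as an element all of
whose coordinates on `(-∞, -1]` are trivial. -/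
private lemma follower [CompactSpace G] (α : MulAut G) (V : Subgroup G)
    (hVo : IsOpen (V : Set G)) (hcont : ∀ z : ℤ, Continuous ⇑(α ^ z)) :
    ∃ k₀ : ℕ, ∀ w : G, (∀ j : ℤ, 1 ≤ j → j ≤ (k₀ : ℤ) → (α ^ (-j)) w ∈ V) →
      ∃ w' : G, (∀ j : ℤ, j ≤ -1 → (α ^ j) w' ∈ V) ∧ w⁻¹ * w' ∈ V := by
  have hVc : IsClosed (V : Set G) := V.isClosed_of_isOpen hVo
  set F : ℕ → Set G := fun k => {g | ∀ j : ℤ, 1 ≤ j → j ≤ (k : ℤ) → (α ^ (-j)) g ∈ V} with hF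
  have hFanti : ∀ {k l : ℕ}, k ≤ l → F l ⊆ F k := by
    intro k l hkl g hg j h1 h2
    exact hg j h1 (le_trans h2 (by exact_mod_cast hkl))
  have hFclosed : ∀ k, IsClosed (F k) := by
    intro k
    have : F k = ⋂ (j : ℤ), ⋂ (_ : 1 ≤ j ∧ j ≤ (k : ℤ)), (⇑(α ^ (-j))) ⁻¹' (V : Set G) := by
      ext g; simp only [Set.mem_iInter, Set.mem_preimage, hF, Set.mem_setOf_eq]
      exact ⟨fun h j hj => h j hj.1 hj.2, fun h j h1 h2 => h j ⟨h1, h2⟩⟩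
    rw [this]
    exact isClosed_iInter fun j => isClosed_iInter fun _ => hVc.preimage (hcont (-j))
  -- finite transversal
  have hcover : (Set.univ : Set G) ⊆ ⋃ h : G, (fun y => h⁻¹ * y) ⁻¹' (V : Set G) := by
    intro g _
    exact Set.mem_iUnion.2 ⟨g, by simp [V.one_mem]⟩
  obtain ⟨T, hT⟩ := isCompact_univ.elim_finite_subcover
    (fun h : G => (fun y => h⁻¹ * y) ⁻¹' (V : Set G))
    (fun h => hVo.preimage (continuous_const.mul continuous_id)) hcover
  classical
  set Ψ : G → Prop := fun h => ∀ k : ℕ, ∃ f ∈ F k, h⁻¹ * f ∈ V with hΨ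
  set kf : G → ℕ := fun h => if hh : Ψ h then 0 else Classical.choose (not_forall.mp hh) with hkf
  refine ⟨T.sup kf + 1, fun w hw => ?_⟩
  -- find the transversal element of w's coset
  have hwT : ∃ h ∈ T, h⁻¹ * w ∈ V := by
    have := hT (Set.mem_univ w)
    simpa using this
  obtain ⟨h, hhT, hhw⟩ := hwT
  have hcoset : ∀ f : G, h⁻¹ * f ∈ V ↔ w⁻¹ * f ∈ V := by
    intro f
    constructor
    · intro hf
      have : (h⁻¹ * w)⁻¹ * (h⁻¹ * f) ∈ V := V.mul_mem (V.inv_mem hhw) hf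
      simpa [mul_assoc] using this
    · intro hf
      have : (h⁻¹ * w) * (w⁻¹ * f) ∈ V := V.mul_mem hhw hf
      simpa [mul_assoc] using this
  have hΨh : Ψ h := by
    by_contra hnot
    have hspec := Classical.choose_spec (not_forall.mp hnot)
    have hkfh : kf h = Classical.choose (not_forall.mp hnot) := by
      rw [hkf]; simp only [hnot, dif_neg, not_false_iff]
    have hle : kf h ≤ T.sup kf + 1 := le_trans (Finset.le_sup hhT) (Nat.le_succ _)
    have hwF : w ∈ F (kf h) := hFanti hle hw
    rw [hkfh] at hwF
    exact hspec ⟨w, hwF, (hcoset w).2 (by simp [V.one_mem])⟩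
  -- FIP
  set C : ℕ → Set G := fun k => F k ∩ {y | w⁻¹ * y ∈ V} with hC
  have hCne : ∀ k, (C k).Nonempty := by
    intro k
    obtain ⟨f, hf, hfc⟩ := hΨh k
    exact ⟨f, hf, (hcoset f).1 hfc⟩
  have hCclosed : ∀ k, IsClosed (C k) := by
    intro k
    exact (hFclosed k).inter (hVc.preimage (continuous_const.mul continuous_id))
  have hCdec : ∀ k, C (k + 1) ⊆ C k := fun k =>
    Set.inter_subset_inter_left _ (hFanti (Nat.le_succ k))
  obtain ⟨w', hw'⟩ := IsCompact.nonempty_iInter_of_sequence_nonempty_isCompact_isClosed C hCdec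
    hCne ((hCclosed 0).isCompact) hCclosed
  simp only [Set.mem_iInter] at hw'
  refine ⟨w', fun j hj => ?_, (hw' 0).2⟩
  have h1 : 1 ≤ -j := by omega
  have := ((hw' (-j).toNat).1) (-j) h1 (by omega)
  rwa [neg_neg] at this

/-- The exact splicing lemma: there is `k₀` such that any `y` whose coordinates on `[-k₀,-1]`
are trivial factors as `y = p * u` where `p` has trivial coordinates on `(-∞,-1]` and
`u = p⁻¹ * y` has trivial coordinates on `[-k₀, ∞)`. -/
private lemma splice [CompactSpace G] (α : MulAut G) (V : Subgroup G)
    (hVo : IsOpen (V : Set G)) (hcont : ∀ z : ℤ, Continuous ⇑(α ^ z)) :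
    ∃ k₀ : ℕ, ∀ y : G, (∀ j : ℤ, 1 ≤ j → j ≤ (k₀ : ℤ) → (α ^ (-j)) y ∈ V) →
      ∃ p : G, (∀ j : ℤ, j ≤ -1 → (α ^ j) p ∈ V) ∧
        (∀ j : ℤ, -(k₀ : ℤ) ≤ j → (α ^ j) (p⁻¹ * y) ∈ V) := by
  have hVc : IsClosed (V : Set G) := V.isClosed_of_isOpen hVo
  obtain ⟨k₀, hFP⟩ := follower α V hVo hcont
  refine ⟨k₀, fun y hy => ?_⟩
  have main : ∀ r : ℕ, ∃ p : G, (∀ j : ℤ, j ≤ -1 → (α ^ j) p ∈ V) ∧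
      (∀ j : ℤ, -(k₀ : ℤ) ≤ j → j < (r : ℤ) → (α ^ j) (p⁻¹ * y) ∈ V) := by
    intro r
    induction r with
    | zero =>
      refine ⟨1, fun j _ => by simpa using V.one_mem, fun j h1 h2 => ?_⟩
      have := hy (-j) (by omega) (by omega)
      simpa using this
    | succ r ih =>
      obtain ⟨p, hpL, hpu⟩ := ih
      have hw : ∀ j : ℤ, 1 ≤ j → j ≤ (k₀ : ℤ) → (α ^ (-j)) ((α ^ (r : ℤ)) (p⁻¹ * y)) ∈ V := by
        intro j h1 h2
        rw [apadd]
        exact hpu _ (by omega) (by omega)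
      obtain ⟨w', hw'L, hw'c⟩ := hFP _ hw
      refine ⟨p * (α ^ (-(r : ℤ))) w', fun j hj => ?_, fun j h1 h2 => ?_⟩
      · rw [map_mul, apadd]
        exact V.mul_mem (hpL j hj) (hw'L (j + -(r : ℤ)) (by omega))
      · have hrw : (p * (α ^ (-(r : ℤ))) w')⁻¹ * y
            = ((α ^ (-(r : ℤ))) w')⁻¹ * (p⁻¹ * y) := by
          rw [mul_inv_rev, mul_assoc]
        rw [hrw, map_mul, map_inv, apadd]
        rcases lt_or_eq_of_le (show j ≤ (r : ℤ) by omega) with hlt | heq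
        · exact V.mul_mem (V.inv_mem (hw'L _ (by omega))) (hpu j h1 hlt)
        · subst heq
          have h0 : (α ^ ((r : ℤ) + -(r : ℤ))) w' = w' := by
            rw [add_neg_cancel, apzero]
          rw [h0]
          have : (((α ^ (r:ℤ)) (p⁻¹ * y))⁻¹ * w')⁻¹ ∈ V := V.inv_mem hw'c
          simpa [mul_inv_rev] using this
  -- pass to the limit by compactness
  set C : ℕ → Set G := fun r => {p | (∀ j : ℤ, j ≤ -1 → (α ^ j) p ∈ V) ∧
      (∀ j : ℤ, -(k₀ : ℤ) ≤ j → j < (r : ℤ) → (α ^ j) (p⁻¹ * y) ∈ V)} with hCdef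
  have hCclosed : ∀ r, IsClosed (C r) := by
    intro r
    have : C r = (⋂ (j : ℤ), ⋂ (_ : j ≤ -1), (⇑(α ^ j)) ⁻¹' (V : Set G)) ∩
        (⋂ (j : ℤ), ⋂ (_ : -(k₀ : ℤ) ≤ j ∧ j < (r : ℤ)),
          (fun p : G => (α ^ j) (p⁻¹ * y)) ⁻¹' (V : Set G)) := by
      ext p
      simp only [hCdef, Set.mem_setOf_eq, Set.mem_inter_iff, Set.mem_iInter, Set.mem_preimage]
      exact ⟨fun h => ⟨fun j hj => h.1 j hj, fun j hj => h.2 j hj.1 hj.2⟩,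
        fun h => ⟨fun j hj => h.1 j hj, fun j h1 h2 => h.2 j ⟨h1, h2⟩⟩⟩
    rw [this]
    refine IsClosed.inter (isClosed_iInter fun j => isClosed_iInter fun _ =>
      hVc.preimage (hcont j)) (isClosed_iInter fun j => isClosed_iInter fun _ =>
      hVc.preimage ((hcont j).comp ((continuous_inv).mul continuous_const)))
  have hCdec : ∀ r, C (r + 1) ⊆ C r := by
    intro r p hp
    exact ⟨hp.1, fun j h1 h2 => hp.2 j h1 (by omega)⟩
  obtain ⟨p, hp⟩ := IsCompact.nonempty_iInter_of_sequence_nonempty_isCompact_isClosed C hCdec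
    main ((hCclosed 0).isCompact) hCclosed
  simp only [Set.mem_iInter] at hp
  refine ⟨p, (hp 0).1, fun j h1 => ?_⟩
  exact (hp (j + 1).toNat).2 j h1 (by omega)

/-- The window sets `W m = {g : all coordinates of g in [-m,m] are trivial}`. -/
private def windowSet (α : MulAut G) (V : Subgroup G) (m : ℕ) : Set G :=
  {g | ∀ j : ℤ, |j| ≤ (m : ℤ) → (α ^ j) g ∈ V}

private lemma windowSet_eq (α : MulAut G) (V : Subgroup G) (m : ℕ) :
    windowSet α V m =
      ⋂ j ∈ Finset.Icc (-(m : ℤ)) (m : ℤ), (⇑(α ^ j)) ⁻¹' (V : Set G) := by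
  ext g
  simp only [windowSet, Set.mem_setOf_eq, Set.mem_iInter, Set.mem_preimage, Finset.mem_Icc]
  constructor
  · intro h j hj; exact h j (abs_le.2 hj)
  · intro h j hj; exact h j (abs_le.1 hj)

private lemma windowSet_isOpen (α : MulAut G) (V : Subgroup G) (hVo : IsOpen (V : Set G))
    (hcont : ∀ z : ℤ, Continuous ⇑(α ^ z)) (m : ℕ) : IsOpen (windowSet α V m) := by
  rw [windowSet_eq]
  exact isOpen_biInter_finset fun j _ => hVo.preimage (hcont j)

private lemma windowSet_isClosed (α : MulAut G) (V : Subgroup G) (hVc : IsClosed (V : Set G))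
    (hcont : ∀ z : ℤ, Continuous ⇑(α ^ z)) (m : ℕ) : IsClosed (windowSet α V m) := by
  rw [windowSet_eq]
  exact isClosed_biInter fun j _ => hVc.preimage (hcont j)

private lemma windowSet_one (α : MulAut G) (V : Subgroup G) (m : ℕ) :
    (1 : G) ∈ windowSet α V m := fun j _ => by simpa using V.one_mem

/-- Window sets form a neighbourhood basis of `1`. -/
private lemma windowSet_basis [CompactSpace G] (α : MulAut G) (V : Subgroup G)
    (hVo : IsOpen (V : Set G)) (hcont : ∀ z : ℤ, Continuous ⇑(α ^ z))
    (hdepth : (⋂ k : ℤ, ⇑(α ^ k) '' (V : Set G)) = ({1} : Set G)) :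
    ∀ U : Set G, IsOpen U → (1 : G) ∈ U → ∃ m : ℕ, windowSet α V m ⊆ U := by
  intro U hU h1U
  have hVc : IsClosed (V : Set G) := V.isClosed_of_isOpen hVo
  by_contra hcon
  push_neg at hcon
  set C : ℕ → Set G := fun m => windowSet α V m ∩ Uᶜ with hC
  have hCne : ∀ m, (C m).Nonempty := by
    intro m
    obtain ⟨g, hg, hgU⟩ := Set.not_subset.1 (hcon m)
    exact ⟨g, hg, hgU⟩
  have hCclosed : ∀ m, IsClosed (C m) :=
    fun m => (windowSet_isClosed α V hVc hcont m).inter hU.isClosed_compl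
  have hCdec : ∀ m, C (m + 1) ⊆ C m := by
    intro m g hg
    exact ⟨fun j hj => hg.1 j (by omega), hg.2⟩
  obtain ⟨g, hg⟩ := IsCompact.nonempty_iInter_of_sequence_nonempty_isCompact_isClosed C hCdec
    hCne ((hCclosed 0).isCompact) hCclosed
  simp only [Set.mem_iInter] at hg
  have hgall : ∀ k : ℤ, g ∈ ⇑(α ^ k) '' (V : Set G) := by
    intro k
    refine ⟨(α ^ (-k)) g, ?_, by rw [apadd]; simp [apzero]⟩
    have := (hg (k.natAbs) ).1 (-k) (by rw [abs_neg, Int.abs_eq_natAbs])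
    exact this
  have : g ∈ (⋂ k : ℤ, ⇑(α ^ k) '' (V : Set G)) := Set.mem_iInter.2 hgall
  rw [hdepth] at this
  have : g = 1 := this
  exact (hg 0).2 (this ▸ h1U)

private lemma open_infinite (h1 : ¬ IsOpen ({(1 : G)} : Set G)) {U : Set G}
    (hU : IsOpen U) (hne : U.Nonempty) : U.Infinite := by
  by_contra hfin
  rw [Set.not_infinite] at hfin
  obtain ⟨u, hu⟩ := hne
  have hsingleton : IsOpen ({u} : Set G) := by
    have hclosed : IsClosed (U \ {u}) := (hfin.subset Set.diff_subset).isClosed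
    have : ({u} : Set G) = U ∩ (U \ {u})ᶜ := by
      ext g
      constructor
      · rintro rfl; exact ⟨hu, fun hg => hg.2 rfl⟩
      · rintro ⟨hgU, hg⟩
        by_contra hgu
        exact hg ⟨hgU, hgu⟩
    rw [this]
    exact hU.inter hclosed.isOpen_compl
  have : ({(1 : G)} : Set G) = (fun g => u * g) ⁻¹' {u} := by
    ext g
    simp only [Set.mem_singleton_iff, Set.mem_preimage]
    constructor
    · rintro rfl; simp
    · intro hg; exact by
        have : u * g = u * 1 := by simpa using hg
        exact mul_left_cancel this
  exact h1 (this ▸ hsingleton.preimage (continuous_const.mul continuous_id))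

private lemma visits_infinite (α : MulAut G) (h1 : ¬ IsOpen ({(1 : G)} : Set G)) (t : G)
    (ht : Dense (Set.range fun n : ℤ => (α ^ n) t)) {U : Set G} (hU : IsOpen U)
    (hne : U.Nonempty) : {n : ℤ | (α ^ n) t ∈ U}.Infinite := by
  by_contra hfin
  rw [Set.not_infinite] at hfin
  set O : Set G := (fun n : ℤ => (α ^ n) t) '' {n : ℤ | (α ^ n) t ∈ U} with hO
  have hOfin : O.Finite := hfin.image _
  have hUinf : U.Infinite := open_infinite h1 hU hne
  have hne' : (U \ O).Nonempty := (hUinf.diff hOfin).nonempty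
  have hopen' : IsOpen (U \ O) := hU.sdiff hOfin.isClosed
  obtain ⟨y, hy, hyU⟩ := ht.exists_mem_open hopen' hne'
  obtain ⟨n, rfl⟩ := hy
  exact hyU.2 (Set.mem_image_of_mem _ hyU.1)

private lemma infinite_unbdd {S : Set ℤ} (h : S.Infinite) : ¬BddAbove S ∨ ¬BddBelow S := by
  by_contra hcon
  push_neg at hcon
  obtain ⟨a, ha⟩ := hcon.1
  obtain ⟨b, hb⟩ := hcon.2
  exact h (Set.Finite.subset (Set.finite_Icc b a) (fun n hn => ⟨hb hn, ha hn⟩))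

private lemma up_or_down [CompactSpace G] (α : MulAut G) (V : Subgroup G)
    (hVo : IsOpen (V : Set G)) (hcont : ∀ z : ℤ, Continuous ⇑(α ^ z))
    (hdepth : (⋂ k : ℤ, ⇑(α ^ k) '' (V : Set G)) = ({1} : Set G))
    (h1 : ¬ IsOpen ({(1 : G)} : Set G)) (t : G)
    (ht : Dense (Set.range fun n : ℤ => (α ^ n) t)) :
    (∀ U : Set G, IsOpen U → U.Nonempty → ∀ N : ℤ, ∃ n, N ≤ n ∧ (α ^ n) t ∈ U) ∨
    (∀ U : Set G, IsOpen U → U.Nonempty → ∀ N : ℤ, ∃ n, n ≤ N ∧ (α ^ n) t ∈ U) := by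
  set tW : ℕ → Set G := fun m => (fun y => t⁻¹ * y) ⁻¹' windowSet α V m with htW
  have htWopen : ∀ m, IsOpen (tW m) := fun m =>
    (windowSet_isOpen α V hVo hcont m).preimage (continuous_const.mul continuous_id)
  have htWmem : ∀ m, t ∈ tW m := fun m => by
    show t⁻¹ * t ∈ windowSet α V m
    rw [inv_mul_cancel]
    exact windowSet_one α V m
  have htWanti : ∀ {m M : ℕ}, m ≤ M → tW M ⊆ tW m := by
    intro m M hmM y hy j hj
    exact hy j (by omega)
  -- the "globalization" step
  have glob : ∀ (U : Set G), IsOpen U → U.Nonempty → ∀ N₁ : ℤ,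
      ∃ n₀ : ℤ, ∃ m : ℕ, ∀ n : ℤ, (α ^ n) t ∈ tW m → (α ^ (n₀ + n)) t ∈ U := by
    intro U hU hne N₁
    obtain ⟨y, hy, hyU⟩ := ht.exists_mem_open hU hne
    obtain ⟨n₀, rfl⟩ := hy
    have hpre : IsOpen ((⇑(α ^ n₀)) ⁻¹' U) := hU.preimage (hcont n₀)
    have htpre : t ∈ (⇑(α ^ n₀)) ⁻¹' U := hyU
    have hQ : IsOpen ((fun w => t * w) ⁻¹' ((⇑(α ^ n₀)) ⁻¹' U)) :=
      hpre.preimage (continuous_const.mul continuous_id)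
    have h1Q : (1 : G) ∈ (fun w => t * w) ⁻¹' ((⇑(α ^ n₀)) ⁻¹' U) := by
      show (α ^ n₀) (t * 1) ∈ U
      simpa using htpre
    obtain ⟨m, hm⟩ := windowSet_basis α V hVo hcont hdepth _ hQ h1Q
    refine ⟨n₀, m, fun n hn => ?_⟩
    have := hm hn
    have h2 : (α ^ n₀) (t * (t⁻¹ * (α ^ n) t)) ∈ U := this
    rw [mul_inv_cancel_left] at h2
    rw [apadd] at h2
    exact h2
  by_cases hup : ∀ m : ℕ, ∀ N : ℤ, ∃ n, N ≤ n ∧ (α ^ n) t ∈ tW m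
  · left
    intro U hU hne N
    obtain ⟨n₀, m, hglob⟩ := glob U hU hne 0
    obtain ⟨n, hn, hmem⟩ := hup m (N - n₀)
    exact ⟨n₀ + n, by omega, hglob n hmem⟩
  · right
    push_neg at hup
    obtain ⟨m₀, N₀, hN₀⟩ := hup
    have hdown : ∀ m : ℕ, ∀ N : ℤ, ∃ n, n ≤ N ∧ (α ^ n) t ∈ tW m := by
      intro m N
      set M := max m m₀ with hM
      have hSinf : {n : ℤ | (α ^ n) t ∈ tW M}.Infinite :=
        visits_infinite α h1 t ht (htWopen M) ⟨t, htWmem M⟩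
      have hnb : ¬BddBelow {n : ℤ | (α ^ n) t ∈ tW M} := by
        rcases infinite_unbdd hSinf with hna | hnb
        · exfalso
          obtain ⟨n, hnS, hn⟩ := not_bddAbove_iff.1 hna N₀
          exact hN₀ n (le_of_lt hn) (htWanti (le_max_right m m₀) hnS)
        · exact hnb
      obtain ⟨n, hnS, hn⟩ := not_bddBelow_iff.1 hnb N
      exact ⟨n, le_of_lt hn, htWanti (le_max_left m m₀) hnS⟩
    intro U hU hne N
    obtain ⟨n₀, m, hglob⟩ := glob U hU hne 0
    obtain ⟨n, hn, hmem⟩ := hdown m (N - n₀)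
    exact ⟨n₀ + n, by omega, hglob n hmem⟩

private lemma dense_aux [CompactSpace G] (α : MulAut G)
    (hcont : ∀ z : ℤ, Continuous ⇑(α ^ z))
    (hcont' : ∀ z : ℤ, Continuous ⇑(α⁻¹ ^ z))
    (V : Subgroup G) (hVo : IsOpen (V : Set G))
    (hdepth : (⋂ k : ℤ, ⇑(α ^ k) '' (V : Set G)) = ({1} : Set G))
    (t : G)
    (hup : ∀ U : Set G, IsOpen U → U.Nonempty → ∀ N : ℤ, ∃ n, N ≤ n ∧ (α ^ n) t ∈ U) :
    Dense (bcgSet α) := by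
  obtain ⟨k₀, hsp1⟩ := splice α V hVo hcont
  obtain ⟨k₁, hsp2⟩ := splice α⁻¹ V hVo hcont'
  set K : ℕ := max k₀ k₁ + 1 with hK
  have hk0K : (k₀ : ℤ) + 1 ≤ (K : ℤ) := by
    have : k₀ + 1 ≤ K := Nat.succ_le_succ (le_max_left _ _)
    exact_mod_cast this
  have hk1K : (k₁ : ℤ) + 1 ≤ (K : ℤ) := by
    have : k₁ + 1 ≤ K := Nat.succ_le_succ (le_max_right _ _)
    exact_mod_cast this
  rw [dense_iff_inter_open]
  intro U hU hne
  obtain ⟨x, hx⟩ := hne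
  -- a window neighbourhood of x inside U
  have hQ : IsOpen ((fun w => x * w) ⁻¹' U) := hU.preimage (continuous_const.mul continuous_id)
  have h1Q : (1 : G) ∈ (fun w => x * w) ⁻¹' U := by
    show x * 1 ∈ U
    simpa using hx
  obtain ⟨m, hm⟩ := windowSet_basis α V hVo hcont hdepth _ hQ h1Q
  -- three visits of the orbit
  obtain ⟨n₁, -, hn₁⟩ := hup (windowSet α V K)
    (windowSet_isOpen α V hVo hcont K) ⟨1, windowSet_one α V K⟩ 0
  have hrun1 : ∀ i : ℤ, |i - n₁| ≤ (K : ℤ) → (α ^ i) t ∈ V := by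
    intro i hi
    have := hn₁ (i - n₁) hi
    rwa [apadd, sub_add_cancel] at this
  have hUxo : IsOpen ((fun y => x⁻¹ * y) ⁻¹' windowSet α V m) :=
    (windowSet_isOpen α V hVo hcont m).preimage (continuous_const.mul continuous_id)
  have hUxne : ((fun y => x⁻¹ * y) ⁻¹' windowSet α V m).Nonempty := by
    refine ⟨x, ?_⟩
    show x⁻¹ * x ∈ windowSet α V m
    rw [inv_mul_cancel]
    exact windowSet_one α V m
  obtain ⟨n₀, hn₀ge, hn₀⟩ := hup _ hUxo hUxne (n₁ + K + m + 1)
  have hvis : ∀ j : ℤ, |j| ≤ (m : ℤ) → (α ^ j) (x⁻¹ * (α ^ n₀) t) ∈ V := hn₀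
  obtain ⟨n₂, hn₂ge, hn₂⟩ := hup (windowSet α V K)
    (windowSet_isOpen α V hVo hcont K) ⟨1, windowSet_one α V K⟩ (n₀ + K + m + 1)
  have hrun2 : ∀ i : ℤ, |i - n₂| ≤ (K : ℤ) → (α ^ i) t ∈ V := by
    intro i hi
    have := hn₂ (i - n₂) hi
    rwa [apadd, sub_add_cancel] at this
  -- first splice: cut on the left of the visit, at the run around n₁
  have hy1 : ∀ j : ℤ, 1 ≤ j → j ≤ (k₀ : ℤ) → (α ^ (-j)) ((α ^ (n₁ + 1)) t) ∈ V := by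
    intro j h1 h2
    rw [apadd]
    exact hrun1 _ (by rw [abs_le]; omega)
  obtain ⟨p, hpL, hpM⟩ := hsp1 _ hy1
  set ρ : G := (α ^ (-(n₁ + 1))) p with hρ
  have hρtriv : ∀ j : ℤ, j ≤ n₁ → (α ^ j) ρ ∈ V := by
    intro j hj
    rw [hρ, apadd]
    exact hpL _ (by omega)
  have hρmatch : ∀ j : ℤ, n₁ + 1 - k₀ ≤ j → (α ^ j) (ρ⁻¹ * t) ∈ V := by
    intro j hj
    have hrw : ρ⁻¹ * t = (α ^ (-(n₁ + 1))) (p⁻¹ * ((α ^ (n₁ + 1)) t)) := by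
      rw [hρ, map_mul, map_inv, apadd, neg_add_cancel, apzero]
    rw [hrw, apadd]
    exact hpM _ (by omega)
  have hρrun2 : ∀ i : ℤ, |i - n₂| ≤ (K : ℤ) → (α ^ i) ρ ∈ V := by
    intro i hi
    have h1 : (α ^ i) t ∈ V := hrun2 i hi
    have h2 : (α ^ i) (ρ⁻¹ * t) ∈ V := hρmatch i (by rw [abs_le] at hi; omega)
    have hrw : (α ^ i) ρ = (α ^ i) t * ((α ^ i) (ρ⁻¹ * t))⁻¹ := by
      rw [← map_inv, ← map_mul]
      congr 1
      group
    rw [hrw]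
    exact V.mul_mem h1 (V.inv_mem h2)
  -- second splice: cut on the right of the visit, at the run around n₂
  have hy2 : ∀ j : ℤ, 1 ≤ j → j ≤ (k₁ : ℤ) → ((α⁻¹) ^ (-j)) ((α ^ (n₂ - 1)) ρ) ∈ V := by
    intro j h1 h2
    rw [inv_zpow_apply, neg_neg, apadd]
    exact hρrun2 _ (by rw [abs_le]; omega)
  obtain ⟨q, hqL, hqM⟩ := hsp2 _ hy2
  have hqR : ∀ i : ℤ, 1 ≤ i → (α ^ i) q ∈ V := by
    intro i hi
    have := hqL (-i) (by omega)
    rwa [inv_zpow_apply, neg_neg] at this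
  have hqM' : ∀ i : ℤ, i ≤ (k₁ : ℤ) → (α ^ i) (q⁻¹ * ((α ^ (n₂ - 1)) ρ)) ∈ V := by
    intro i hi
    have := hqM (-i) (by omega)
    rwa [inv_zpow_apply, neg_neg] at this
  set e' : G := (α ^ (-(n₂ - 1))) q with he'
  have he'R : ∀ j : ℤ, n₂ ≤ j → (α ^ j) e' ∈ V := by
    intro j hj
    rw [he', apadd]
    exact hqR _ (by omega)
  have he'match : ∀ j : ℤ, j ≤ n₂ - 1 + k₁ → (α ^ j) (e'⁻¹ * ρ) ∈ V := by
    intro j hj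
    have hrw : e'⁻¹ * ρ = (α ^ (-(n₂ - 1))) (q⁻¹ * ((α ^ (n₂ - 1)) ρ)) := by
      rw [he', map_mul, map_inv, apadd, neg_add_cancel, apzero]
    rw [hrw, apadd]
    exact hqM' _ (by omega)
  have he'L : ∀ j : ℤ, j ≤ n₁ → (α ^ j) e' ∈ V := by
    intro j hj
    have h1 := hρtriv j hj
    have h2 := he'match j (by omega)
    have hrw : (α ^ j) e' = (α ^ j) ρ * ((α ^ j) (e'⁻¹ * ρ))⁻¹ := by
      rw [← map_inv, ← map_mul]
      congr 1
      group
    rw [hrw]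
    exact V.mul_mem h1 (V.inv_mem h2)
  have hematcht : ∀ j : ℤ, n₁ + 1 - k₀ ≤ j → j ≤ n₂ - 1 + k₁ → (α ^ j) (t⁻¹ * e') ∈ V := by
    intro j hj1 hj2
    have h1 := hρmatch j hj1
    have h2 := he'match j hj2
    have harg : t⁻¹ * e' = (ρ⁻¹ * t)⁻¹ * (e'⁻¹ * ρ)⁻¹ := by group
    rw [harg, map_mul, map_inv, map_inv]
    exact V.mul_mem (V.inv_mem h1) (V.inv_mem h2)
  set e : G := (α ^ n₀) e' with he
  have heU : e ∈ U := by
    have hwin : x⁻¹ * e ∈ windowSet α V m := by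
      intro j hj
      have h1 : (α ^ j) (x⁻¹ * (α ^ n₀) t) ∈ V := hvis j hj
      have h2 : (α ^ j) (((α ^ n₀) t)⁻¹ * e) ∈ V := by
        have hrw : ((α ^ n₀) t)⁻¹ * e = (α ^ n₀) (t⁻¹ * e') := by
          rw [he, map_mul, map_inv]
        rw [hrw, apadd]
        exact hematcht _ (by rw [abs_le] at hj; omega) (by rw [abs_le] at hj; omega)
      have hrw : (α ^ j) (x⁻¹ * e)
          = (α ^ j) (x⁻¹ * (α ^ n₀) t) * (α ^ j) (((α ^ n₀) t)⁻¹ * e) := by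
        rw [← map_mul]
        congr 1
        group
      rw [hrw]
      exact V.mul_mem h1 h2
    have := hm hwin
    simpa [mul_inv_cancel_left] using this
  have hetriv : ∀ i : ℤ, (i ≤ n₁ - n₀ ∨ n₂ - n₀ ≤ i) → (α ^ i) e ∈ V := by
    intro i hi
    rw [he, apadd]
    rcases hi with h | h
    · exact he'L _ (by omega)
    · exact he'R _ (by omega)
  refine ⟨e, heU, ?_, ?_⟩
  · -- e ∈ conSet α
    intro s hs
    rw [mem_nhds_iff] at hs
    obtain ⟨U', hU's, hU'o, hU'1⟩ := hs
    obtain ⟨M, hM⟩ := windowSet_basis α V hVo hcont hdepth U' hU'o hU'1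
    rw [Filter.mem_map]
    refine mem_atTop_sets.2 ⟨(n₂ - n₀ + M).toNat, fun n hn => ?_⟩
    refine Set.mem_preimage.2 (hU's (hM ?_))
    intro j hj
    have hcast : ((α ^ (n : ℕ)) : MulAut G) e = (α ^ ((n : ℕ) : ℤ)) e := by
      rw [zpow_natCast]
    show (α ^ j) ((α ^ (n : ℕ)) e) ∈ V
    rw [hcast, apadd]
    refine hetriv _ (Or.inr ?_)
    have h2 : (n₂ - n₀ + M : ℤ) ≤ (n : ℤ) :=
      le_trans (Int.self_le_toNat _) (by exact_mod_cast hn)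
    rw [abs_le] at hj
    omega
  · -- e ∈ conSet α⁻¹
    intro s hs
    rw [mem_nhds_iff] at hs
    obtain ⟨U', hU's, hU'o, hU'1⟩ := hs
    obtain ⟨M, hM⟩ := windowSet_basis α V hVo hcont hdepth U' hU'o hU'1
    rw [Filter.mem_map]
    refine mem_atTop_sets.2 ⟨(n₀ - n₁ + M).toNat, fun n hn => ?_⟩
    refine Set.mem_preimage.2 (hU's (hM ?_))
    intro j hj
    have hcast : (((α⁻¹) ^ (n : ℕ)) : MulAut G) e = (α ^ (-((n : ℕ) : ℤ))) e := by
      rw [← zpow_natCast (α⁻¹) n, inv_zpow_apply]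
    show (α ^ j) (((α⁻¹) ^ (n : ℕ)) e) ∈ V
    rw [hcast, apadd]
    refine hetriv _ (Or.inl ?_)
    have h2 : (n₀ - n₁ + M : ℤ) ≤ (n : ℤ) :=
      le_trans (Int.self_le_toNat _) (by exact_mod_cast hn)
    rw [abs_le] at hj
    omega

end BcgAux

/-- For a topologically transitive compact pair of finite depth, the
homoclinic group `bcg α` is dense in `G`. -/
theorem bcg_dense_of_finiteDepth
    [Group G] [TopologicalSpace G] [IsTopologicalGroup G] [T2Space G]
    [TotallyDisconnectedSpace G] [CompactSpace G]
    (α : MulAut G) (hαc : Continuous ⇑α) (hαc' : Continuous ⇑(α⁻¹))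
    (htt : ∃ x : G, Dense (Set.range fun n : ℤ => (α ^ n) x))
    (hfd : ∃ V : Subgroup G, IsOpen (V : Set G) ∧
      (⋂ k : ℤ, ⇑(α ^ k) '' (V : Set G)) = ({1} : Set G)) :
    Dense (bcgSet α) := by
  classical
  obtain ⟨t, ht⟩ := htt
  obtain ⟨V, hVo, hdepth⟩ := hfd
  have hcont : ∀ z : ℤ, Continuous ⇑(α ^ z) := cont_zpow α hαc hαc'
  have hcont' : ∀ z : ℤ, Continuous ⇑((α⁻¹) ^ z) := by
    intro z
    have h2 : Continuous ⇑(α⁻¹)⁻¹ := by rw [inv_inv]; exact hαc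
    exact cont_zpow α⁻¹ hαc' h2 z
  by_cases h1 : IsOpen ({(1 : G)} : Set G)
  · -- degenerate case: `G` is trivial
    have ht1 : t = 1 := by
      obtain ⟨z, hz, hz1⟩ := ht.exists_mem_open h1 ⟨1, rfl⟩
      obtain ⟨n, rfl⟩ := hz
      have h0 : (α ^ n) t = 1 := hz1
      have := congrArg (⇑(α ^ (-n))) h0
      rwa [apadd, neg_add_cancel, apzero, map_one] at this
    have hall : ∀ y : G, y = 1 := by
      intro y
      have hyopen : IsOpen ({y} : Set G) := by
        have hyeq : ({y} : Set G) = (fun g => y⁻¹ * g) ⁻¹' {1} := by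
          ext g
          simp [eq_comm, inv_mul_eq_one]
        rw [hyeq]
        exact h1.preimage (continuous_const.mul continuous_id)
      obtain ⟨z, hz, hzy⟩ := ht.exists_mem_open hyopen ⟨y, rfl⟩
      obtain ⟨n, rfl⟩ := hz
      have h0 : (α ^ n) t = y := hzy
      rw [ht1, map_one] at h0
      exact h0.symm
    rw [dense_iff_inter_open]
    intro U hU hne
    obtain ⟨u, hu⟩ := hne
    refine ⟨u, hu, ?_, ?_⟩
    · show Tendsto (fun n : ℕ => (α ^ n) u) atTop (𝓝 1)
      have : (fun n : ℕ => (α ^ n) u) = fun _ => (1 : G) := by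
        funext n
        rw [hall u, map_one]
      rw [this]
      exact tendsto_const_nhds
    · show Tendsto (fun n : ℕ => ((α⁻¹) ^ n) u) atTop (𝓝 1)
      have : (fun n : ℕ => ((α⁻¹) ^ n) u) = fun _ => (1 : G) := by
        funext n
        rw [hall u, map_one]
      rw [this]
      exact tendsto_const_nhds
  · rcases up_or_down α V hVo hcont hdepth h1 t ht with hup | hdown
    · exact dense_aux α hcont hcont' V hVo hdepth t hup
    · have hdepth' : (⋂ k : ℤ, ⇑((α⁻¹) ^ k) '' (V : Set G)) = ({1} : Set G) := by
        have himg : ∀ k : ℤ, ⇑((α⁻¹) ^ k) '' (V : Set G) = ⇑(α ^ (-k)) '' (V : Set G) := by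
          intro k
          have : ⇑((α⁻¹) ^ k) = ⇑(α ^ (-k)) := funext (inv_zpow_apply α k)
          rw [this]
        rw [Set.iInter_congr himg, ← hdepth]
        ext g
        simp only [Set.mem_iInter]
        exact ⟨fun h k => by simpa using h (-k), fun h k => h (-k)⟩
      have hup' : ∀ U : Set G, IsOpen U → U.Nonempty → ∀ N : ℤ,
          ∃ n, N ≤ n ∧ ((α⁻¹) ^ n) t ∈ U := by
        intro U hU hne N
        obtain ⟨n, hn, hmem⟩ := hdown U hU hne (-N)
        refine ⟨-n, by omega, ?_⟩
        rw [inv_zpow_apply, neg_neg]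
        exact hmem
      have hcont'' : ∀ z : ℤ, Continuous ⇑((α⁻¹)⁻¹ ^ z) := by
        intro z
        rw [inv_inv]
        exact hcont z
      have hres := dense_aux α⁻¹ hcont' hcont'' V hVo hdepth' t hup'
      have hbcg : bcgSet (α⁻¹) = bcgSet α := by
        unfold bcgSet
        rw [inv_inv]
        exact Set.inter_comm _ _
      rwa [hbcg] at hres
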